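/- Let F be a CDF on (0,∞) and 0 ≤ c_j < c_{j+1} with f_j = F(c_j), f_{j+1} = F(c_{j+1}). Then ∫_{(c_j, c_{j+1}]} (F(t) + F(t−) − f_j − f_{j+1}) dF(t) = 0, where F(t−) is the left limit of F at t. -/

import Mathlib

open MeasureTheory

lemma psr_key (ν : Measure ℝ) [IsFiniteMeasure ν] :
    (∫⁻ t, ν (Set.Iic t) ∂ν) + (∫⁻ t, ν (Set.Iio t) ∂ν) = (ν Set.univ) * (ν Set.univ) := by
  have h1 : MeasurableSet {p : ℝ × ℝ | p.2 ≤ p.1} :=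
    measurableSet_le measurable_snd measurable_fst
  have h2 : MeasurableSet {p : ℝ × ℝ | p.2 < p.1} :=
    measurableSet_lt measurable_snd measurable_fst
  have h3 : MeasurableSet {p : ℝ × ℝ | p.1 < p.2} :=
    measurableSet_lt measurable_fst measurable_snd
  have e1 : (∫⁻ t, ν (Set.Iic t) ∂ν) = (ν.prod ν) {p | p.2 ≤ p.1} := by
    rw [Measure.prod_apply h1]; rfl
  have e2 : (∫⁻ t, ν (Set.Iio t) ∂ν) = (ν.prod ν) {p | p.2 < p.1} := by
    rw [Measure.prod_apply h2]; rfl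
  have e3 : (ν.prod ν) {p : ℝ × ℝ | p.2 < p.1} = (ν.prod ν) {p : ℝ × ℝ | p.1 < p.2} := by
    have hs : {p : ℝ × ℝ | p.2 < p.1} = Prod.swap ⁻¹' {p : ℝ × ℝ | p.1 < p.2} := rfl
    rw [hs, ← Measure.map_apply measurable_swap h3, Measure.prod_swap]
  have e4 : (ν.prod ν) {p : ℝ × ℝ | p.2 ≤ p.1} + (ν.prod ν) {p : ℝ × ℝ | p.1 < p.2}
      = (ν.prod ν) Set.univ := by
    have hd : Disjoint {p : ℝ × ℝ | p.2 ≤ p.1} {p : ℝ × ℝ | p.1 < p.2} :=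
      Set.disjoint_left.2 fun p (hp : p.2 ≤ p.1) (hp' : p.1 < p.2) => absurd hp (not_le.2 hp')
    rw [← measure_union hd h3]
    congr 1
    ext p
    simp [le_or_gt]
  rw [e1, e2, e3, e4, ← Set.univ_prod_univ, Measure.prod_prod]

theorem psr_centered_integral_zero (F : StieltjesFunction ℝ)
    (a b : ℝ) (ha : 0 ≤ a) (hab : a < b) :
    ∫ t in Set.Ioc a b, (F t + Function.leftLim F t - F a - F b) ∂F.measure = 0 := by
  set ν := F.measure.restrict (Set.Ioc a b) with hν
  haveI : IsFiniteMeasure ν := by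
    constructor
    rw [hν, Measure.restrict_apply_univ, F.measure_Ioc]
    exact ENNReal.ofReal_lt_top
  have hνuniv : ν Set.univ = ENNReal.ofReal (F b - F a) := by
    rw [hν, Measure.restrict_apply_univ, F.measure_Ioc]
  -- slice identities
  have hIic : ∀ t ∈ Set.Ioc a b, ν (Set.Iic t) = ENNReal.ofReal (F t - F a) := by
    intro t ht
    rw [hν, Measure.restrict_apply measurableSet_Iic]
    have hs : Set.Iic t ∩ Set.Ioc a b = Set.Ioc a t := by
      ext s
      simp only [Set.mem_inter_iff, Set.mem_Iic, Set.mem_Ioc]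
      exact ⟨fun h => ⟨h.2.1, h.1⟩, fun h => ⟨h.2, h.1, h.2.trans ht.2⟩⟩
    rw [hs, F.measure_Ioc]
  have hIio : ∀ t ∈ Set.Ioc a b, ν (Set.Iio t) = ENNReal.ofReal (Function.leftLim F t - F a) := by
    intro t ht
    rw [hν, Measure.restrict_apply measurableSet_Iio]
    have hs : Set.Iio t ∩ Set.Ioc a b = Set.Ioo a t := by
      ext s
      simp only [Set.mem_inter_iff, Set.mem_Iio, Set.mem_Ioo]
      exact ⟨fun h => ⟨h.2.1, h.1⟩, fun h => ⟨h.2, h.1, (le_of_lt h.2).trans ht.2⟩⟩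
    rw [hs, F.measure_Ioo]
  -- measurability
  have hmF : Measurable F := F.mono.measurable
  have hmL : Measurable (Function.leftLim F) := F.mono.leftLim.measurable
  -- nonnegativity and bounds on Ioc a b
  have hbound1 : ∀ t ∈ Set.Ioc a b, F a ≤ F t ∧ F t ≤ F b :=
    fun t ht => ⟨F.mono ht.1.le, F.mono ht.2⟩
  have hbound2 : ∀ t ∈ Set.Ioc a b, F a ≤ Function.leftLim F t ∧ Function.leftLim F t ≤ F b :=
    fun t ht => ⟨F.mono.le_leftLim ht.1, (F.mono.leftLim_le le_rfl).trans (F.mono ht.2)⟩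
  -- integrability
  have hint1 : Integrable (fun t => F t - F a) ν := by
    refine ⟨(hmF.sub measurable_const).aestronglyMeasurable,
      HasFiniteIntegral.of_bounded (C := F b - F a) ?_⟩
    rw [hν, ae_restrict_iff' measurableSet_Ioc]
    filter_upwards with t ht
    rw [Real.norm_eq_abs, abs_of_nonneg (sub_nonneg.2 (hbound1 t ht).1)]
    exact sub_le_sub_right (hbound1 t ht).2 _
  have hint2 : Integrable (fun t => Function.leftLim F t - F a) ν := by
    refine ⟨(hmL.sub measurable_const).aestronglyMeasurable,
      HasFiniteIntegral.of_bounded (C := F b - F a) ?_⟩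
    rw [hν, ae_restrict_iff' measurableSet_Ioc]
    filter_upwards with t ht
    rw [Real.norm_eq_abs, abs_of_nonneg (sub_nonneg.2 (hbound2 t ht).1)]
    exact sub_le_sub_right (hbound2 t ht).2 _
  have hint3 : Integrable (fun _ : ℝ => F b - F a) ν := integrable_const _
  -- rewrite the integrand
  have hsplit : (fun t => F t + Function.leftLim F t - F a - F b)
      = fun t => (F t - F a) + (Function.leftLim F t - F a) - (F b - F a) := by
    funext t; ring
  -- lintegral identities
  have hA : ∫⁻ t, ENNReal.ofReal (F t - F a) ∂ν = ∫⁻ t, ν (Set.Iic t) ∂ν := by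
    rw [hν]
    refine setLIntegral_congr_fun measurableSet_Ioc ?_
    intro t ht
    beta_reduce
    rw [← hν, hIic t ht]
  have hB : ∫⁻ t, ENNReal.ofReal (Function.leftLim F t - F a) ∂ν
      = ∫⁻ t, ν (Set.Iio t) ∂ν := by
    rw [hν]
    refine setLIntegral_congr_fun measurableSet_Ioc ?_
    intro t ht
    beta_reduce
    rw [← hν, hIio t ht]
  have hAB : (∫⁻ t, ENNReal.ofReal (F t - F a) ∂ν)
      + (∫⁻ t, ENNReal.ofReal (Function.leftLim F t - F a) ∂ν)
      = ENNReal.ofReal (F b - F a) * ENNReal.ofReal (F b - F a) := by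
    rw [hA, hB, psr_key ν, hνuniv]
  -- convert to Bochner integrals
  have hnn1 : ∀ᵐ t ∂ν, 0 ≤ F t - F a := by
    rw [hν, ae_restrict_iff' measurableSet_Ioc]
    filter_upwards with t ht using sub_nonneg.2 (hbound1 t ht).1
  have hnn2 : ∀ᵐ t ∂ν, 0 ≤ Function.leftLim F t - F a := by
    rw [hν, ae_restrict_iff' measurableSet_Ioc]
    filter_upwards with t ht using sub_nonneg.2 (hbound2 t ht).1
  have hI1 : ∫ t, (F t - F a) ∂ν = (∫⁻ t, ENNReal.ofReal (F t - F a) ∂ν).toReal :=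
    integral_eq_lintegral_of_nonneg_ae hnn1 (hmF.sub measurable_const).aestronglyMeasurable
  have hI2 : ∫ t, (Function.leftLim F t - F a) ∂ν
      = (∫⁻ t, ENNReal.ofReal (Function.leftLim F t - F a) ∂ν).toReal :=
    integral_eq_lintegral_of_nonneg_ae hnn2 (hmL.sub measurable_const).aestronglyMeasurable
  have hfin1 : (∫⁻ t, ENNReal.ofReal (F t - F a) ∂ν) ≠ ⊤ :=
    (hasFiniteIntegral_iff_ofReal hnn1).1 hint1.2 |>.ne
  have hfin2 : (∫⁻ t, ENNReal.ofReal (Function.leftLim F t - F a) ∂ν) ≠ ⊤ :=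
    (hasFiniteIntegral_iff_ofReal hnn2).1 hint2.2 |>.ne
  have hsum : ∫ t, (F t - F a) ∂ν + ∫ t, (Function.leftLim F t - F a) ∂ν
      = (F b - F a) * (F b - F a) := by
    rw [hI1, hI2, ← ENNReal.toReal_add hfin1 hfin2, hAB,
      ← ENNReal.ofReal_mul (sub_nonneg.2 (F.mono hab.le)),
      ENNReal.toReal_ofReal (mul_nonneg (sub_nonneg.2 (F.mono hab.le)) (sub_nonneg.2 (F.mono hab.le)))]
  have hconst : ∫ _t, (F b - F a) ∂ν = (F b - F a) * (F b - F a) := by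
    rw [integral_const, measureReal_def, hνuniv, ENNReal.toReal_ofReal (sub_nonneg.2 (F.mono hab.le)), smul_eq_mul,
      mul_comm]
  calc ∫ t in Set.Ioc a b, (F t + Function.leftLim F t - F a - F b) ∂F.measure
      = ∫ t, ((F t - F a) + (Function.leftLim F t - F a) - (F b - F a)) ∂ν := by
        rw [hsplit]
    _ = (∫ t, ((F t - F a) + (Function.leftLim F t - F a)) ∂ν) - ∫ _t, (F b - F a) ∂ν :=
        integral_sub (hint1.add hint2) hint3
    _ = 0 := by rw [integral_add hint1 hint2, hsum, hconst, sub_self]
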